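/- Let A ∈ ℂ^{n×n} be Schur stable and C ∈ ℂ^{p×n}. Then there exist a Hermitian matrix P and λ ∈ ℝ such that [A B; C D]* diag(P, I) [A B; C D] − diag(P, λI_m) ≺ 0, i.e., the dual SDP of the H∞ analysis problem is strictly feasible for any B, D. -/

import Mathlib

open Matrix
open scoped ComplexOrder

namespace DualSDPAux

open Filter
open scoped ENNReal NNReal Topology

attribute [local instance] Matrix.frobeniusSeminormedAddCommGroup
  Matrix.frobeniusNormedAddCommGroup Matrix.frobeniusNormedRing Matrix.frobeniusNormedAlgebra

lemma norm_pow_le {n : ℕ} (A : Matrix (Fin n) (Fin n) ℂ) (hA : spectralRadius ℂ A < 1) :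
    ∃ r : ℝ, 0 ≤ r ∧ r < 1 ∧ ∀ᶠ k in atTop, ‖A ^ k‖ ≤ r ^ k := by
  obtain ⟨r, hr1, hr2⟩ := exists_between hA
  have hrtop : r ≠ ⊤ := (hr2.trans_le le_top).ne
  have gel := spectrum.pow_nnnorm_pow_one_div_tendsto_nhds_spectralRadius A
  have hev : ∀ᶠ k : ℕ in atTop, (‖A ^ k‖₊ : ℝ≥0∞) ^ (1 / (k : ℝ)) < r :=
    gel.eventually_lt_const hr1
  refine ⟨r.toReal, ENNReal.toReal_nonneg, ?_, ?_⟩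
  · have := ENNReal.toReal_lt_toReal hrtop (by norm_num : (1 : ℝ≥0∞) ≠ ⊤) |>.mpr hr2
    simpa using this
  · filter_upwards [hev, eventually_ge_atTop 1] with k hk hk1
    have hkpos : (0 : ℝ) < (k : ℝ) := by exact_mod_cast hk1
    have h2 : ((‖A ^ k‖₊ : ℝ≥0∞) ^ (1 / (k : ℝ))) ^ (k : ℝ) < r ^ (k : ℝ) :=
      ENNReal.rpow_lt_rpow hk hkpos
    rw [← ENNReal.rpow_mul, one_div, inv_mul_cancel₀ hkpos.ne', ENNReal.rpow_one] at h2
    have h3 : (‖A ^ k‖₊ : ℝ≥0∞) < r ^ k := by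
      rwa [← ENNReal.rpow_natCast r k]
    have h4 : (r ^ k) ≠ ⊤ := ENNReal.pow_ne_top hrtop
    have h5 := (ENNReal.toReal_lt_toReal (by simp) h4).mpr h3
    rw [ENNReal.toReal_pow] at h5
    simpa [coe_nnnorm] using h5.le

lemma lyapunov {n : ℕ} (A : Matrix (Fin n) (Fin n) ℂ) (hA : spectralRadius ℂ A < 1)
    (Q : Matrix (Fin n) (Fin n) ℂ) (hQ : Q.IsHermitian) :
    ∃ P : Matrix (Fin n) (Fin n) ℂ, P.IsHermitian ∧ Aᴴ * P * A - P = -Q := by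
  obtain ⟨r, hr0, hr1, hev⟩ := norm_pow_le A hA
  set f : ℕ → Matrix (Fin n) (Fin n) ℂ := fun k => (Aᴴ) ^ k * Q * A ^ k with hf
  have hnorm : ∀ k, ‖f k‖ ≤ ‖Q‖ * (‖A ^ k‖ * ‖A ^ k‖) := by
    intro k
    calc ‖(Aᴴ) ^ k * Q * A ^ k‖ ≤ ‖(Aᴴ) ^ k * Q‖ * ‖A ^ k‖ := norm_mul_le _ _
      _ ≤ ‖(Aᴴ) ^ k‖ * ‖Q‖ * ‖A ^ k‖ := by
          gcongr
          exact norm_mul_le _ _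
      _ = ‖Q‖ * (‖A ^ k‖ * ‖A ^ k‖) := by
          rw [← conjTranspose_pow, Matrix.frobenius_norm_conjTranspose]
          ring
  have hsum : Summable f := by
    apply Summable.of_norm_bounded_eventually_nat (g := fun k => ‖Q‖ * ((r * r) ^ k))
    · exact (summable_geometric_of_lt_one (by positivity) (by nlinarith)).mul_left _
    · filter_upwards [hev] with k hk
      refine (hnorm k).trans ?_
      rw [mul_pow]
      gcongr
  set P := ∑' k, f k with hP
  have hterm : ∀ k, (f k).IsHermitian := by
    intro k
    simp only [hf, Matrix.IsHermitian, conjTranspose_mul, conjTranspose_pow,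
      conjTranspose_conjTranspose, hQ.eq, Matrix.mul_assoc]
  have herm : P.IsHermitian := by
    have h := Matrix.conjTranspose_tsum (f := f) (L := SummationFilter.unconditional ℕ)
    rw [Matrix.IsHermitian, hP]
    refine h.trans ?_
    exact tsum_congr fun k => (hterm k).eq
  have hshift : ∀ k, Aᴴ * f k * A = f (k + 1) := by
    intro k
    simp only [hf, pow_succ A k, pow_succ' Aᴴ k, Matrix.mul_assoc]
  have key : Aᴴ * P * A = P - Q := by
    have h1 : Aᴴ * P = ∑' k, Aᴴ * f k := (hsum.tsum_mul_left Aᴴ).symm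
    have h2 : (∑' k, Aᴴ * f k) * A = ∑' k, Aᴴ * f k * A :=
      ((hsum.mul_left Aᴴ).tsum_mul_right A).symm
    have h3 : (∑' k, Aᴴ * f k * A) = ∑' k, f (k + 1) := tsum_congr fun k => hshift k
    have h4 : P = f 0 + ∑' k, f (k + 1) := Summable.tsum_eq_zero_add hsum
    have hf0 : f 0 = Q := by simp [hf]
    rw [h1, h2, h3]
    rw [h4, hf0]
    abel
  exact ⟨P, herm, by rw [key]; abel⟩

end DualSDPAux

open DualSDPAux in
lemma exists_shift_posDef {m : ℕ} (S : Matrix (Fin m) (Fin m) ℂ) (hS : S.IsHermitian) :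
    ∃ lam : ℝ, ((lam : ℂ) • (1 : Matrix (Fin m) (Fin m) ℂ) - S).PosDef := by
  classical
  set U : Matrix (Fin m) (Fin m) ℂ := (hS.eigenvectorUnitary : Matrix (Fin m) (Fin m) ℂ) with hU
  set μ : Fin m → ℝ := hS.eigenvalues with hμ
  set lam : ℝ := 1 + ∑ i, |μ i| with hlam
  have hUU : U * Uᴴ = 1 := by
    rw [← Matrix.star_eq_conjTranspose]
    exact (Matrix.mem_unitaryGroup_iff).mp hS.eigenvectorUnitary.2
  have hspec : S = U * Matrix.diagonal (RCLike.ofReal ∘ μ) * Uᴴ := by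
    rw [← Matrix.star_eq_conjTranspose]
    exact hS.spectral_theorem
  have hd : Matrix.diagonal (fun i => ((lam - μ i : ℝ) : ℂ)) =
      (lam : ℂ) • (1 : Matrix (Fin m) (Fin m) ℂ) - Matrix.diagonal (RCLike.ofReal ∘ μ) := by
    ext i j
    rcases eq_or_ne i j with rfl | hij
    · simp only [Matrix.diagonal_apply_eq, Matrix.sub_apply, Matrix.smul_apply,
        Matrix.one_apply_eq, Function.comp_apply, smul_eq_mul, mul_one]
      rw [show (RCLike.ofReal (μ i) : ℂ) = ((μ i : ℝ) : ℂ) from rfl]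
      push_cast
      ring
    · simp [Matrix.diagonal_apply_ne _ hij, Matrix.one_apply_ne hij]
  have hdiag : Matrix.diagonal (fun i => ((lam - μ i : ℝ) : ℂ)) =
      Matrix.diagonal (fun i => ((lam - μ i - 1 : ℝ) : ℂ)) + 1 := by
    ext i j
    rcases eq_or_ne i j with rfl | hij
    · simp only [Matrix.diagonal_apply_eq, Matrix.add_apply, Matrix.one_apply_eq]
      push_cast
      ring
    · simp [Matrix.diagonal_apply_ne _ hij, Matrix.one_apply_ne hij]
  have hkey : (lam : ℂ) • (1 : Matrix (Fin m) (Fin m) ℂ) - S =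
      U * Matrix.diagonal (fun i => ((lam - μ i - 1 : ℝ) : ℂ)) * Uᴴ + 1 := by
    have h1 : (lam : ℂ) • (1 : Matrix (Fin m) (Fin m) ℂ) - S =
        U * Matrix.diagonal (fun i => ((lam - μ i : ℝ) : ℂ)) * Uᴴ := by
      rw [hd, Matrix.mul_sub, Matrix.sub_mul, Matrix.mul_smul, Matrix.smul_mul,
        Matrix.mul_one, hUU, ← hspec]
    rw [h1, hdiag, Matrix.mul_add, Matrix.add_mul, Matrix.mul_one, hUU]
  refine ⟨lam, ?_⟩
  rw [hkey]
  refine Matrix.PosDef.posSemidef_add ?_ Matrix.PosDef.one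
  refine Matrix.PosSemidef.mul_mul_conjTranspose_same ?_ U
  rw [Matrix.posSemidef_diagonal_iff]
  intro i
  have hge : (0 : ℝ) ≤ lam - μ i - 1 := by
    have h1 : μ i ≤ ∑ j, |μ j| :=
      (le_abs_self _).trans
        (Finset.single_le_sum (f := fun j => |μ j|) (fun j _ => abs_nonneg _)
          (Finset.mem_univ i))
    simp only [hlam]
    linarith
  exact_mod_cast Complex.zero_le_real.mpr hge

lemma fromBlocks_one_posDef {n m : ℕ} (X : Matrix (Fin n) (Fin m) ℂ)
    (E : Matrix (Fin m) (Fin m) ℂ) (hE : (E - Xᴴ * X).PosDef) :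
    (Matrix.fromBlocks 1 X Xᴴ E).PosDef := by
  have hXX : (Xᴴ * X).IsHermitian := Matrix.isHermitian_conjTranspose_mul_self X
  have hEh : E.IsHermitian := by
    have := hE.isHermitian.add hXX
    simpa using this
  haveI : Invertible (1 : Matrix (Fin n) (Fin n) ℂ) := invertibleOne
  refine Matrix.PosDef.of_dotProduct_mulVec_pos ?_ ?_
  · rw [Matrix.isHermitian_fromBlocks_iff]
    exact ⟨Matrix.isHermitian_one, rfl, Matrix.conjTranspose_conjTranspose X, hEh⟩
  · intro z hz
    set x : Fin n → ℂ := z ∘ Sum.inl with hx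
    set y : Fin m → ℂ := z ∘ Sum.inr with hy
    have hz' : Sum.elim x y = z := Sum.elim_comp_inl_inr z
    have hq := Matrix.schur_complement_eq₁₁ (A := (1 : Matrix (Fin n) (Fin n) ℂ))
      X E x y Matrix.isHermitian_one
    rw [inv_one, Matrix.one_mul, Matrix.mul_one] at hq
    rw [Matrix.dotProduct_mulVec, ← hz', hq, Matrix.vecMul_one]
    by_cases hy0 : y = 0
    · have hx0 : x ≠ 0 := by
        intro h
        apply hz
        rw [← hz', h, hy0]
        ext (i | j) <;> rfl
      have h2 : star y ᵥ* (E - Xᴴ * X) ⬝ᵥ y = 0 := by simp [hy0]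
      have h1 : (0 : ℂ) < star (x + X *ᵥ y) ⬝ᵥ (x + X *ᵥ y) := by
        rw [hy0]
        simp only [Matrix.mulVec_zero, add_zero]
        exact Matrix.dotProduct_star_self_pos_iff.mpr hx0
      rw [h2, add_zero]
      exact h1
    · have h1 : (0 : ℂ) ≤ star (x + X *ᵥ y) ⬝ᵥ (x + X *ᵥ y) :=
        dotProduct_star_self_nonneg _
      have h2 : (0 : ℂ) < star y ᵥ* (E - Xᴴ * X) ⬝ᵥ y := by
        rw [← Matrix.dotProduct_mulVec]
        exact hE.dotProduct_mulVec_pos hy0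
      exact add_pos_of_nonneg_of_pos h1 h2

/-- the dual SDP of `H∞` analysis is strictly feasible: for a Schur stable
`A` and any `B, C, D` there are Hermitian `P` and `λ ∈ ℝ` with
`[A*PA−P+C*C, A*PB+C*D; B*PA+D*C, B*PB+D*D−λI] ≺ 0`. -/
theorem dual_sdp_strictly_feasible {n m p : ℕ}
    (A : Matrix (Fin n) (Fin n) ℂ) (hA : spectralRadius ℂ A < 1)
    (C : Matrix (Fin p) (Fin n) ℂ)
    (B : Matrix (Fin n) (Fin m) ℂ) (D : Matrix (Fin p) (Fin m) ℂ) :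
    ∃ (P : Matrix (Fin n) (Fin n) ℂ) (lam : ℝ), P.IsHermitian ∧
      (-(fromBlocks (Aᴴ * P * A - P + Cᴴ * C) (Aᴴ * P * B + Cᴴ * D)
          (Bᴴ * P * A + Dᴴ * C)
          (Bᴴ * P * B + Dᴴ * D - (lam : ℂ) • (1 : Matrix (Fin m) (Fin m) ℂ)))).PosDef := by
  obtain ⟨P, hP, hlyap⟩ := DualSDPAux.lyapunov A hA (Cᴴ * C + 1)
    ((Matrix.isHermitian_conjTranspose_mul_self C).add Matrix.isHermitian_one)
  set X : Matrix (Fin n) (Fin m) ℂ := Aᴴ * P * B + Cᴴ * D with hX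
  set W : Matrix (Fin m) (Fin m) ℂ := Bᴴ * P * B + Dᴴ * D with hW
  have hWh : W.IsHermitian :=
    (Matrix.isHermitian_conjTranspose_mul_mul B hP).add (Matrix.isHermitian_conjTranspose_mul_self D)
  have hXX : (Xᴴ * X).IsHermitian := Matrix.isHermitian_conjTranspose_mul_self X
  obtain ⟨lam, hlam⟩ := exists_shift_posDef (W + Xᴴ * X) (hWh.add hXX)
  refine ⟨P, lam, hP, ?_⟩
  have htop : Aᴴ * P * A - P + Cᴴ * C = -1 := by
    rw [hlyap]; abel
  have hY : Bᴴ * P * A + Dᴴ * C = Xᴴ := by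
    rw [hX, Matrix.conjTranspose_add, Matrix.conjTranspose_mul, Matrix.conjTranspose_mul,
      Matrix.conjTranspose_mul, Matrix.conjTranspose_conjTranspose,
      Matrix.conjTranspose_conjTranspose, hP.eq, Matrix.mul_assoc]
  rw [htop, hY, ← hX, ← hW]
  have hblk : -(Matrix.fromBlocks (-1) X Xᴴ (W - (lam : ℂ) • 1)) =
      Matrix.fromBlocks 1 (-X) (-X)ᴴ ((lam : ℂ) • 1 - W) := by
    simp [Matrix.fromBlocks_neg, Matrix.conjTranspose_neg, neg_sub]
  rw [hblk]
  apply fromBlocks_one_posDef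
  have : (lam : ℂ) • (1 : Matrix (Fin m) (Fin m) ℂ) - W - (-X)ᴴ * (-X) =
      (lam : ℂ) • 1 - (W + Xᴴ * X) := by
    rw [Matrix.conjTranspose_neg, Matrix.neg_mul, Matrix.mul_neg, neg_neg]
    abel
  rw [this]
  exact hlam
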